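/- Let F be a finite field with q ≥ 2 elements and assume s ≥ r (A is a tall matrix). For ANY computation strategy (f_i, g_i)_{i<N} and ANY subset S ⊆ {0,…,N−1} with |S| ≤ mn − 1, there is no function D from the tuples of worker outputs indexed by S to F^(r×t) such that D((f_i(A)^T g_i(B))_{i∈S}) = A^T B for all A ∈ F^(s×r) and B ∈ F^(s×t). Consequently, every k-recoverable computation strategy satisfies k ≥ mn. -/

import Mathlib

open Matrix BigOperators

private lemma card_matrix' (α β F : Type*) [Fintype α] [Fintype β] [Fintype F]
    [DecidableEq α] [DecidableEq β] :
    Fintype.card (Matrix α β F) = Fintype.card F ^ (Fintype.card α * Fintype.card β) := by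
  show Fintype.card (α → β → F) = _
  rw [Fintype.card_fun, Fintype.card_fun, ← pow_mul, Nat.mul_comm]

theorem matrix_mul_recovery_converse {F : Type*} [Field F] [Fintype F]
    {s p u m n N : ℕ}
    (hm : 0 < m) (hn : 0 < n) (hp : 0 < p) (hu : 0 < u) (hs : m * p ≤ s)
    (f : Fin N → Matrix (Fin s) (Fin m × Fin p) F → Matrix (Fin s) (Fin p) F)
    (g : Fin N → Matrix (Fin s) (Fin n × Fin u) F → Matrix (Fin s) (Fin u) F) :
    (∀ S : Finset (Fin N), S.card ≤ m * n - 1 →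
      ¬ ∃ D : ({i : Fin N // i ∈ S} → Matrix (Fin p) (Fin u) F) →
              Matrix (Fin m × Fin p) (Fin n × Fin u) F,
          ∀ (A : Matrix (Fin s) (Fin m × Fin p) F) (B : Matrix (Fin s) (Fin n × Fin u) F),
            D (fun i => (f i.1 A)ᵀ * g i.1 B) = Aᵀ * B)
    ∧
    (∀ k : ℕ, k ≤ N →
      (∀ S : Finset (Fin N), S.card = k →
        ∃ D : ({i : Fin N // i ∈ S} → Matrix (Fin p) (Fin u) F) →
              Matrix (Fin m × Fin p) (Fin n × Fin u) F,
          ∀ (A : Matrix (Fin s) (Fin m × Fin p) F) (B : Matrix (Fin s) (Fin n × Fin u) F),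
            D (fun i => (f i.1 A)ᵀ * g i.1 B) = Aᵀ * B) →
      m * n ≤ k) := by
  have hF : 1 < Fintype.card F := Fintype.one_lt_card
  have main : ∀ S : Finset (Fin N), S.card ≤ m * n - 1 →
      ¬ ∃ D : ({i : Fin N // i ∈ S} → Matrix (Fin p) (Fin u) F) →
              Matrix (Fin m × Fin p) (Fin n × Fin u) F,
          ∀ (A : Matrix (Fin s) (Fin m × Fin p) F) (B : Matrix (Fin s) (Fin n × Fin u) F),
            D (fun i => (f i.1 A)ᵀ * g i.1 B) = Aᵀ * B := by
    rintro S hS ⟨D, hD⟩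
    -- the embedding of column indices into rows
    set emb : Fin m × Fin p → Fin s := fun j => Fin.castLE hs (finProdFinEquiv j) with hemb
    -- the special matrix A
    set A : Matrix (Fin s) (Fin m × Fin p) F := fun i j => if i = emb j then 1 else 0 with hA
    -- lifting an arbitrary target matrix M to a B with Aᵀ * B = M
    set lift : Matrix (Fin m × Fin p) (Fin n × Fin u) F → Matrix (Fin s) (Fin n × Fin u) F :=
      fun M i l => if h : (i : ℕ) < m * p then M (finProdFinEquiv.symm ⟨(i : ℕ), h⟩) l else 0
      with hlift
    have key : ∀ M, Aᵀ * lift M = M := by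
      intro M
      ext j l
      have : (Aᵀ * lift M) j l = ∑ i, (if i = emb j then 1 else 0) * lift M i l := by
        rw [Matrix.mul_apply]; rfl
      rw [this]
      have : ∀ i : Fin s, (if i = emb j then 1 else 0) * lift M i l
          = if i = emb j then lift M i l else 0 := by
        intro i; split <;> simp
      simp_rw [this, Finset.sum_ite_eq' Finset.univ (emb j) (fun i => lift M i l),
        if_pos (Finset.mem_univ _)]
      have hlt : ((emb j : Fin s) : ℕ) < m * p := by
        simpa [hemb] using (finProdFinEquiv j).isLt
      rw [hlift]
      simp only [hlt, dif_pos]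
      congr 1
      have : (⟨((emb j : Fin s) : ℕ), hlt⟩ : Fin (m * p)) = finProdFinEquiv j := by
        apply Fin.ext; simp [hemb]
      rw [this, Equiv.symm_apply_apply]
    -- injection from target matrices to worker outputs
    set Φ : Matrix (Fin m × Fin p) (Fin n × Fin u) F →
        ({i : Fin N // i ∈ S} → Matrix (Fin p) (Fin u) F) :=
      fun M i => (f i.1 A)ᵀ * g i.1 (lift M) with hΦ
    have hinj : Function.Injective Φ := by
      intro M₁ M₂ h
      have h1 := hD A (lift M₁)
      have h2 := hD A (lift M₂)
      rw [key] at h1; rw [key] at h2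
      calc M₁ = D (Φ M₁) := h1.symm
        _ = D (Φ M₂) := by rw [h]
        _ = M₂ := h2
    have hcard := Fintype.card_le_of_injective Φ hinj
    rw [card_matrix'] at hcard
    have hfun : Fintype.card ({i : Fin N // i ∈ S} → Matrix (Fin p) (Fin u) F)
        = (Fintype.card F ^ (p * u)) ^ S.card := by
      rw [Fintype.card_fun, card_matrix', Fintype.card_coe, Fintype.card_fin, Fintype.card_fin]
    rw [hfun, ← pow_mul] at hcard
    simp only [Fintype.card_prod, Fintype.card_fin] at hcard
    have hexp : p * u * S.card < m * p * (n * u) := by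
      calc p * u * S.card ≤ p * u * (m * n - 1) := by
            exact Nat.mul_le_mul_left _ hS
        _ < p * u * (m * n) := by
            have h1 : 0 < p * u := Nat.mul_pos hp hu
            have h2 : 0 < m * n := Nat.mul_pos hm hn
            have : m * n - 1 < m * n := by omega
            exact (Nat.mul_lt_mul_left h1).mpr this
        _ = m * p * (n * u) := by ring
    exact absurd hcard (not_le.mpr (Nat.pow_lt_pow_right hF hexp))
  refine ⟨main, ?_⟩
  intro k hk hrec
  by_contra h
  push_neg at h
  obtain ⟨S, _, hScard⟩ := Finset.exists_subset_card_eq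
    (s := (Finset.univ : Finset (Fin N))) (n := k) (by simpa using hk)
  exact main S (by omega) (hrec S hScard)
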